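/- Under the assumptions of the ε-persistence-queue delay argument, if ε = (Q_max + Z_max)/D where Q_max, Z_max bound the packet and virtual queues (Q(t) ≤ Q_max, 0 ≤ Z(t) ≤ Z_max for all t), the virtual queue satisfies Z(τ+1) ≥ Z(τ) + ε − μ(τ) − d(τ)·s whenever Q(τ) > 0, and jobs depart in FIFO order, then every job admitted at slot t departs (is served or dropped) by slot t + D. Formally: it cannot be that Q(τ) > 0 for all τ ∈ [t+1, t+D] and Σ_{τ=t+1}^{t+D}[μ(τ) + d(τ)·s] < Q(t+1). -/

import Mathlib

/-- Worst-case delay guarantee: with `ε = (Q_max + Z_max)/D`, it cannot happen that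
the queue stays positive over `[t+1, t+D]` while the total service plus drops over
that window is less than `Q(t+1)`; hence every job admitted at slot `t` departs by
slot `t + D`. -/
theorem stmt7 (ε s Qmax Zmax : ℝ) (hs : 0 < s)
    (Q Z μ d : ℕ → ℝ) (t D : ℕ) (hD : 0 < D)
    (hεdef : ε = (Qmax + Zmax) / D)
    (hμ : ∀ τ, 0 ≤ μ τ) (hd : ∀ τ, 0 ≤ d τ)
    (hZnonneg : ∀ τ, 0 ≤ Z τ) (hZb : ∀ τ, Z τ ≤ Zmax) (hQb : ∀ τ, Q τ ≤ Qmax)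
    (hZrec : ∀ τ, 0 < Q τ → Z τ + ε - μ τ - d τ * s ≤ Z (τ + 1)) :
    ¬ ((∀ τ ∈ Finset.Icc (t + 1) (t + D), 0 < Q τ) ∧
       ∑ τ ∈ Finset.Icc (t + 1) (t + D), (μ τ + d τ * s) < Q (t + 1)) := by
  rintro ⟨hpos, hsum⟩
  -- telescoped bound
  have key : ∀ k, k ≤ D →
      Z (t + 1) + k * ε - ∑ j ∈ Finset.range k, (μ (t + 1 + j) + d (t + 1 + j) * s)
        ≤ Z (t + 1 + k) := by
    intro k hk
    induction k with
    | zero => simp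
    | succ n ih =>
      have hn : n ≤ D := Nat.le_of_succ_le hk
      have hmem : t + 1 + n ∈ Finset.Icc (t + 1) (t + D) := by
        simp [Finset.mem_Icc]; omega
      have hrec := hZrec (t + 1 + n) (hpos _ hmem)
      have := ih hn
      rw [Finset.sum_range_succ]
      push_cast
      have : t + 1 + (n + 1) = (t + 1 + n) + 1 := by ring
      rw [this]
      calc Z (t+1) + ((n:ℝ)+1) * ε - (∑ j ∈ Finset.range n, (μ (t+1+j) + d (t+1+j) * s) + (μ (t+1+n) + d (t+1+n) * s))
          = (Z (t+1) + (n:ℝ) * ε - ∑ j ∈ Finset.range n, (μ (t+1+j) + d (t+1+j) * s)) + ε - μ (t+1+n) - d (t+1+n) * s := by ring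
        _ ≤ Z (t+1+n) + ε - μ (t+1+n) - d (t+1+n) * s := by linarith [ih hn]
        _ ≤ Z ((t+1+n)+1) := hrec
  have hicc : ∑ τ ∈ Finset.Icc (t + 1) (t + D), (μ τ + d τ * s)
      = ∑ j ∈ Finset.range D, (μ (t + 1 + j) + d (t + 1 + j) * s) := by
    rw [show Finset.Icc (t+1) (t+D) = Finset.Ico (t+1) (t+D+1) by ext x; simp [Finset.mem_Icc, Finset.mem_Ico],
      Finset.sum_Ico_eq_sum_range]
    have : t + D + 1 - (t + 1) = D := by omega
    rw [this]
  have hDε : (D : ℝ) * ε = Qmax + Zmax := by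
    rw [hεdef]
    field_simp
  have h1 := key D le_rfl
  have h2 := hZb (t + 1 + D)
  have h3 := hZnonneg (t + 1)
  have h4 := hQb (t + 1)
  rw [hicc] at hsum
  linarith
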